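/- Let S and S' be self-similar Jordan zippers in ℝ^n (i.e., zippers whose structural parametrizations are homeomorphisms from [0,1] onto their attractors γ and γ') with the same number of maps m and the same signature ε. Then there exists a unique homeomorphism f : γ → γ' such that f ∘ S_i = S'_i ∘ f on γ for every i ∈ {1, ..., m}. -/

import Mathlib

open Set Metric

/-- `S i`, for `i < m`, is a contracting similarity with ratio `r i ∈ (0,1)`. -/
def IsSimilaritySystem {X : Type*} [MetricSpace X] (m : ℕ)
    (S : ℕ → X → X) (r : ℕ → ℝ) : Prop :=
  ∀ i < m, 0 < r i ∧ r i < 1 ∧ ∀ x y, dist (S i x) (S i y) = r i * dist x y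

/-- Self-similar zipper with maps `S 0, …, S (m-1)`, ratios `r`, vertices `z 0, …, z m`,
signature `ε` (values in `{0,1}`).  Here `S i` plays the role of the map `S_{i+1}` of the
paper, so the zipper conditions read `S i (z 0) = z (i + ε i)` and
`S i (z m) = z (i + 1 - ε i)`. -/
def IsZipper {X : Type*} [MetricSpace X] (m : ℕ)
    (S : ℕ → X → X) (r : ℕ → ℝ) (z : ℕ → X) (ε : ℕ → ℕ) : Prop :=
  1 ≤ m ∧ IsSimilaritySystem m S r ∧ (∀ i < m, ε i ≤ 1) ∧
    ∀ i < m, S i (z 0) = z (i + ε i) ∧ S i (z m) = z (i + 1 - ε i)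

/-- Linear zipper on `[0,1]`, with vertices `0 = t 0 < t 1 < … < t m = 1`. -/
def IsLinearZipper (m : ℕ) (T : ℕ → ℝ → ℝ) (r : ℕ → ℝ) (t : ℕ → ℝ) (ε : ℕ → ℕ) : Prop :=
  IsZipper m T r t ε ∧ t 0 = 0 ∧ t m = 1 ∧ ∀ i < m, t i < t (i + 1)

/-- `K` is the attractor of the iterated function system `{S i : i < m}`. -/
def IsAttractor {X : Type*} [MetricSpace X] (m : ℕ) (S : ℕ → X → X) (K : Set X) : Prop :=
  K.Nonempty ∧ IsCompact K ∧ K = ⋃ i ∈ Finset.range m, S i '' K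

/-- `g` is a structural parametrization of the zipper `S` (with vertices `z`)
relative to the linear zipper `T` (with vertices `t`). -/
def IsStructuralParam {X : Type*} [MetricSpace X] (m : ℕ) (S : ℕ → X → X)
    (T : ℕ → ℝ → ℝ) (t : ℕ → ℝ) (z : ℕ → X) (g : ℝ → X) : Prop :=
  ContinuousOn g (Icc 0 1) ∧ (∀ i ≤ m, g (t i) = z i) ∧
    ∀ i < m, ∀ x ∈ Icc (0:ℝ) 1, S i (g x) = g (T i x)

/-- A Jordan zipper: a zipper whose attractor `γ` is a Jordan arc, i.e. some structural
parametrization is injective on `[0,1]` (hence a homeomorphism onto `γ`). -/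
def IsJordanZipper {X : Type*} [MetricSpace X] (m : ℕ) (S : ℕ → X → X) (r : ℕ → ℝ)
    (z : ℕ → X) (ε : ℕ → ℕ) (γ : Set X) : Prop :=
  IsZipper m S r z ε ∧ IsAttractor m S γ ∧
    ∃ T rT t g, IsLinearZipper m T rT t ε ∧ IsStructuralParam m S T t z g ∧
      InjOn g (Icc 0 1) ∧ g '' Icc 0 1 = γ

/-- `g` is an injective continuous parametrization of the arc `γ` by `[0,1]`. -/
def IsArcParam {X : Type*} [MetricSpace X] (γ : Set X) (g : ℝ → X) : Prop :=
  ContinuousOn g (Icc 0 1) ∧ InjOn g (Icc 0 1) ∧ g '' Icc 0 1 = γ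

/-- Bounded turning with constant `M`: every subarc `γ_{xy}` (expressed via any
parametrization of the arc) has diameter at most `M‖x - y‖`. -/
def BoundedTurning {X : Type*} [MetricSpace X] (γ : Set X) (M : ℝ) : Prop :=
  0 < M ∧ ∀ g : ℝ → X, IsArcParam γ g →
    ∀ s ∈ Icc (0:ℝ) 1, ∀ u ∈ Icc (0:ℝ) 1, diam (g '' uIcc s u) ≤ M * dist (g s) (g u)

/-- `f` agrees with the systems `S` and `S'` on `γ`: `f ∘ S i = S' i ∘ f` on `γ`. -/
def Agrees {X Y : Type*} [MetricSpace X] [MetricSpace Y] (m : ℕ)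
    (S : ℕ → X → X) (S' : ℕ → Y → Y) (γ : Set X) (f : X → Y) : Prop :=
  ∀ i < m, ∀ x ∈ γ, f (S i x) = S' i (f x)

/-- `f` restricts to a homeomorphism of the compact set `γ` onto `γ'`. -/
def IsHomeoOnto {X Y : Type*} [MetricSpace X] [MetricSpace Y]
    (γ : Set X) (γ' : Set Y) (f : X → Y) : Prop :=
  ContinuousOn f γ ∧ InjOn f γ ∧ f '' γ = γ'

/-- Composition `S_{i₁} ∘ … ∘ S_{i_k}` along a multi-index (a list). -/
def compS {X : Type*} (S : ℕ → X → X) : List ℕ → X → X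
  | [] => id
  | i :: l => S i ∘ compS S l

/-- Product of the ratios along a multi-index. -/
def ratioProd (p : ℕ → ℝ) (l : List ℕ) : ℝ := (l.map p).prod

section Affine

/-- a similarity of ℝ is affine -/
lemma affine_of_dist {T : ℝ → ℝ} {r a b : ℝ} (hr : 0 < r)
    (hd : ∀ x y, dist (T x) (T y) = r * dist x y) (ha : T 0 = a) (hb : T 1 = b) (x : ℝ) :
    T x = a + (b - a) * x := by
  have s1 : (T x - a) ^ 2 = r ^ 2 * x ^ 2 := by
    have h1 : |T x - a| = r * |x - 0| := by rw [← Real.dist_eq, ← Real.dist_eq, ← ha]; exact hd x 0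
    have := congrArg (· ^ 2) h1
    simpa [mul_pow, sq_abs] using this
  have s2 : (T x - b) ^ 2 = r ^ 2 * (x - 1) ^ 2 := by
    have h1 : |T x - b| = r * |x - 1| := by rw [← Real.dist_eq, ← Real.dist_eq, ← hb]; exact hd x 1
    have := congrArg (· ^ 2) h1
    simpa [mul_pow, sq_abs] using this
  have s3 : (b - a) ^ 2 = r ^ 2 := by
    have h1 : |b - a| = r * |(1:ℝ) - 0| := by rw [← Real.dist_eq, ← Real.dist_eq, ← ha, ← hb]; exact hd 1 0
    have := congrArg (· ^ 2) h1
    simpa [mul_pow, sq_abs] using this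
  have hba : b - a ≠ 0 := by
    intro h
    rw [h] at s3
    nlinarith
  have key : 2 * (b - a) * (T x - (a + (b - a) * x)) = 0 := by linear_combination s1 - s2 - (2 * x - 1) * s3
  have h2 : (2 : ℝ) * (b - a) ≠ 0 := by
    simp [hba]
  have := mul_eq_zero.mp key
  rcases this with h | h
  · exact absurd h h2
  · linarith

end Affine

section LZ

variable {m : ℕ} {T : ℕ → ℝ → ℝ} {rT : ℕ → ℝ} {t : ℕ → ℝ} {ε : ℕ → ℕ}

lemma lz_t_mono (hL : IsLinearZipper m T rT t ε) : ∀ {i j : ℕ}, i ≤ j → j ≤ m → t i ≤ t j := by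
  intro i j hij hj
  induction j with
  | zero => simp [Nat.le_zero.mp hij]
  | succ k ih =>
    rcases eq_or_lt_of_le hij with h | h
    · rw [h]
    · have h1 : t i ≤ t k := ih (Nat.lt_succ_iff.mp h) (le_trans (Nat.le_succ k) hj)
      have h2 : t k < t (k + 1) := hL.2.2.2 k (Nat.lt_of_lt_of_le (Nat.lt_succ_self k) hj)
      linarith

lemma lz_t_mem (hL : IsLinearZipper m T rT t ε) {i : ℕ} (hi : i ≤ m) : t i ∈ Icc (0:ℝ) 1 := by
  constructor
  · rw [← hL.2.1]; exact lz_t_mono hL (Nat.zero_le i) hi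
  · rw [← hL.2.2.1]; exact lz_t_mono hL hi le_rfl

lemma lz_eps (hL : IsLinearZipper m T rT t ε) {i : ℕ} (hi : i < m) : ε i = 0 ∨ ε i = 1 :=
  Nat.le_one_iff_eq_zero_or_eq_one.mp (hL.1.2.2.1 i hi)

lemma lz_T0 (hL : IsLinearZipper m T rT t ε) {i : ℕ} (hi : i < m) : T i 0 = t (i + ε i) := by
  rw [← hL.2.1]; exact (hL.1.2.2.2 i hi).1

lemma lz_T1 (hL : IsLinearZipper m T rT t ε) {i : ℕ} (hi : i < m) : T i 1 = t (i + 1 - ε i) := by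
  rw [← hL.2.2.1]; exact (hL.1.2.2.2 i hi).2

lemma lz_ratio (hL : IsLinearZipper m T rT t ε) {i : ℕ} (hi : i < m) :
    rT i = t (i + 1) - t i := by
  obtain ⟨hr0, hr1, hd⟩ := hL.1.2.1 i hi
  have h : dist (T i 0) (T i 1) = rT i := by
    rw [hd 0 1]; simp [Real.dist_eq]
  have hlt : t i < t (i + 1) := hL.2.2.2 i hi
  rcases lz_eps hL hi with he | he
  · rw [lz_T0 hL hi, lz_T1 hL hi, he] at h
    simp only [Nat.add_zero, Nat.sub_zero] at h
    rw [Real.dist_eq, abs_of_nonpos (by linarith)] at h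
    linarith
  · rw [lz_T0 hL hi, lz_T1 hL hi, he] at h
    simp only [Nat.add_sub_cancel] at h
    rw [Real.dist_eq, abs_of_nonneg (by linarith)] at h
    linarith

/-- the explicit affine form of the maps of a linear zipper -/
lemma lz_affine (hL : IsLinearZipper m T rT t ε) {i : ℕ} (hi : i < m) :
    (ε i = 0 ∧ ∀ x, T i x = t i + rT i * x) ∨ (ε i = 1 ∧ ∀ x, T i x = t (i + 1) - rT i * x) := by
  obtain ⟨hr0, hr1, hd⟩ := hL.1.2.1 i hi
  rcases lz_eps hL hi with he | he
  · left
    refine ⟨he, fun x => ?_⟩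
    have h0 : T i 0 = t i := by rw [lz_T0 hL hi, he]; norm_num
    have h1 : T i 1 = t (i + 1) := by rw [lz_T1 hL hi, he]; norm_num
    have := affine_of_dist hr0 hd h0 h1 x
    rw [this, lz_ratio hL hi]
  · right
    refine ⟨he, fun x => ?_⟩
    have h0 : T i 0 = t (i + 1) := by rw [lz_T0 hL hi, he]
    have h1 : T i 1 = t i := by rw [lz_T1 hL hi, he]; norm_num
    have := affine_of_dist hr0 hd h0 h1 x
    rw [this, lz_ratio hL hi]; ring

lemma lz_mem_piece (hL : IsLinearZipper m T rT t ε) {i : ℕ} (hi : i < m) {x : ℝ}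
    (hx : x ∈ Icc (0:ℝ) 1) : T i x ∈ Icc (t i) (t (i + 1)) := by
  have hr : rT i = t (i+1) - t i := lz_ratio hL hi
  have hlt : t i < t (i + 1) := hL.2.2.2 i hi
  rcases lz_affine hL hi with ⟨_, hf⟩ | ⟨_, hf⟩ <;>
    · rw [hf x]
      constructor <;> nlinarith [hx.1, hx.2]

lemma lz_mapsTo (hL : IsLinearZipper m T rT t ε) {i : ℕ} (hi : i < m) :
    MapsTo (T i) (Icc (0:ℝ) 1) (Icc (0:ℝ) 1) := by
  intro x hx
  have h := lz_mem_piece hL hi hx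
  have h1 := (lz_t_mem hL (le_of_lt hi)).1
  have h2 := (lz_t_mem hL hi).2
  exact ⟨le_trans h1 h.1, le_trans h.2 h2⟩

lemma lz_piece_exists (hL : IsLinearZipper m T rT t ε) {x : ℝ} (hx : x ∈ Icc (0:ℝ) 1) :
    ∃ i < m, t i ≤ x ∧ x ≤ t (i + 1) := by
  classical
  set F := (Finset.range m).filter (fun i => t i ≤ x) with hF
  have h0F : 0 ∈ F := by
    rw [hF, Finset.mem_filter]
    exact ⟨Finset.mem_range.mpr hL.1.1, by rw [hL.2.1]; exact hx.1⟩
  have hFne : F.Nonempty := ⟨0, h0F⟩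
  set j := F.max' hFne with hj
  have hjF : j ∈ F := F.max'_mem hFne
  rw [hF, Finset.mem_filter, Finset.mem_range] at hjF
  refine ⟨j, hjF.1, hjF.2, ?_⟩
  by_cases hjm : j + 1 = m
  · rw [hjm, hL.2.2.1]; exact hx.2
  · have hjm' : j + 1 < m := lt_of_le_of_ne hjF.1 hjm
    by_contra hc
    push_neg at hc
    have : j + 1 ∈ F := by
      rw [hF, Finset.mem_filter, Finset.mem_range]
      exact ⟨hjm', le_of_lt hc⟩
    have := F.le_max' (j + 1) this
    omega

lemma lz_surj_piece (hL : IsLinearZipper m T rT t ε) {i : ℕ} (hi : i < m) {x : ℝ}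
    (hx : x ∈ Icc (t i) (t (i + 1))) : ∃ y ∈ Icc (0:ℝ) 1, T i y = x := by
  have hr : rT i = t (i+1) - t i := lz_ratio hL hi
  have hr0 : 0 < rT i := (hL.1.2.1 i hi).1
  rcases lz_affine hL hi with ⟨_, hf⟩ | ⟨_, hf⟩
  · refine ⟨(x - t i) / rT i, ⟨div_nonneg (by linarith [hx.1]) hr0.le, ?_⟩, ?_⟩
    · rw [div_le_one hr0]; nlinarith [hx.2]
    · rw [hf]; field_simp; ring
  · refine ⟨(t (i+1) - x) / rT i, ⟨div_nonneg (by linarith [hx.2]) hr0.le, ?_⟩, ?_⟩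
    · rw [div_le_one hr0]; nlinarith [hx.1]
    · rw [hf]; field_simp; ring

end LZ

section Words

variable {X : Type*} [MetricSpace X]

lemma ratioProd_nil (p : ℕ → ℝ) : ratioProd p [] = 1 := by simp [ratioProd]

lemma ratioProd_cons (p : ℕ → ℝ) (i : ℕ) (l : List ℕ) :
    ratioProd p (i :: l) = p i * ratioProd p l := by simp [ratioProd]

lemma compS_dist {m : ℕ} {S : ℕ → X → X} {r : ℕ → ℝ} (hsim : IsSimilaritySystem m S r) :
    ∀ w : List ℕ, (∀ j ∈ w, j < m) → ∀ x y,
      dist (compS S w x) (compS S w y) = ratioProd r w * dist x y := by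
  intro w
  induction w with
  | nil => intro _ x y; simp [compS, ratioProd_nil]
  | cons i l ih =>
    intro hv x y
    have hi : i < m := hv i (List.mem_cons_self)
    have hl : ∀ j ∈ l, j < m := fun j hj => hv j (List.mem_cons_of_mem i hj)
    show dist (S i (compS S l x)) (S i (compS S l y)) = _
    rw [(hsim i hi).2.2, ih hl, ratioProd_cons]
    ring

lemma ratioProd_pos {m : ℕ} {S : ℕ → X → X} {r : ℕ → ℝ} (hsim : IsSimilaritySystem m S r) :
    ∀ w : List ℕ, (∀ j ∈ w, j < m) → 0 < ratioProd r w := by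
  intro w
  induction w with
  | nil => intro _; simp [ratioProd_nil]
  | cons i l ih =>
    intro hv
    rw [ratioProd_cons]
    exact mul_pos ((hsim i (hv i (List.mem_cons_self))).1)
      (ih fun j hj => hv j (List.mem_cons_of_mem i hj))

lemma ratioProd_le_pow {m : ℕ} {S : ℕ → X → X} {r : ℕ → ℝ} (hsim : IsSimilaritySystem m S r)
    {ρ : ℝ} (hρ : ∀ i < m, r i ≤ ρ) :
    ∀ w : List ℕ, (∀ j ∈ w, j < m) → ratioProd r w ≤ ρ ^ w.length := by
  intro w
  induction w with
  | nil => intro _; simp [ratioProd_nil]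
  | cons i l ih =>
    intro hv
    have hi : i < m := hv i (List.mem_cons_self)
    have hl : ∀ j ∈ l, j < m := fun j hj => hv j (List.mem_cons_of_mem i hj)
    rw [ratioProd_cons, List.length_cons, pow_succ]
    have h1 : 0 ≤ r i := (hsim i hi).1.le
    have h2 : 0 < ratioProd r l := ratioProd_pos hsim l hl
    have h3 : 0 ≤ ρ := le_trans h1 (hρ i hi)
    calc r i * ratioProd r l ≤ ρ * ρ ^ l.length :=
          mul_le_mul (hρ i hi) (ih hl) h2.le h3
      _ = ρ ^ l.length * ρ := mul_comm _ _

/-- a uniform contraction bound for a similarity system -/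
lemma exists_rho {m : ℕ} {S : ℕ → X → X} {r : ℕ → ℝ} (hsim : IsSimilaritySystem m S r)
    (hm : 1 ≤ m) : ∃ ρ : ℝ, 0 < ρ ∧ ρ < 1 ∧ ∀ i < m, r i ≤ ρ := by
  classical
  have hne : ((Finset.range m).image r).Nonempty := by
    refine ⟨r 0, Finset.mem_image_of_mem r (Finset.mem_range.mpr hm)⟩
  set ρ := ((Finset.range m).image r).max' hne with hρdef
  have hmem : ρ ∈ (Finset.range m).image r := Finset.max'_mem _ hne
  obtain ⟨i0, hi0, hρ0⟩ := Finset.mem_image.mp hmem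
  refine ⟨ρ, ?_, ?_, ?_⟩
  · rw [← hρ0]; exact (hsim i0 (Finset.mem_range.mp hi0)).1
  · rw [← hρ0]; exact (hsim i0 (Finset.mem_range.mp hi0)).2.1
  · intro i hi
    exact Finset.le_max' _ _ (Finset.mem_image_of_mem r (Finset.mem_range.mpr hi))

end Words

section LZWords

variable {m : ℕ} {T : ℕ → ℝ → ℝ} {rT : ℕ → ℝ} {t : ℕ → ℝ} {ε : ℕ → ℕ}

lemma lz_compS_mapsTo (hL : IsLinearZipper m T rT t ε) :
    ∀ w : List ℕ, (∀ j ∈ w, j < m) →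
      MapsTo (compS T w) (Icc (0:ℝ) 1) (Icc (0:ℝ) 1) := by
  intro w
  induction w with
  | nil => intro _ x hx; simpa [compS] using hx
  | cons i l ih =>
    intro hv x hx
    have hi : i < m := hv i (List.mem_cons_self)
    have hl : ∀ j ∈ l, j < m := fun j hj => hv j (List.mem_cons_of_mem i hj)
    exact lz_mapsTo hL hi (ih hl hx)

lemma lz_cover (hL : IsLinearZipper m T rT t ε) :
    ∀ k : ℕ, ∀ x ∈ Icc (0:ℝ) 1, ∃ w : List ℕ, w.length = k ∧ (∀ j ∈ w, j < m) ∧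
      ∃ y ∈ Icc (0:ℝ) 1, compS T w y = x := by
  intro k
  induction k with
  | zero => intro x hx; exact ⟨[], rfl, by simp, x, hx, rfl⟩
  | succ k ih =>
    intro x hx
    obtain ⟨i, hi, h1, h2⟩ := lz_piece_exists hL hx
    obtain ⟨y0, hy0, hTy0⟩ := lz_surj_piece hL hi ⟨h1, h2⟩
    obtain ⟨w, hwl, hwv, y, hy, hcy⟩ := ih y0 hy0
    refine ⟨i :: w, by simp [hwl], ?_, y, hy, ?_⟩
    · intro j hj
      rcases List.mem_cons.mp hj with h | h
      · rw [h]; exact hi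
      · exact hwv j h
    · show T i (compS T w y) = x
      rw [hcy, hTy0]

/-- a point of `[0,1]` is within `ρ ^ k` of a point of the form `compS T w 0`. -/
lemma lz_dense (hL : IsLinearZipper m T rT t ε) {ρ : ℝ} (hρ : ∀ i < m, rT i ≤ ρ)
    (k : ℕ) {x : ℝ} (hx : x ∈ Icc (0:ℝ) 1) :
    ∃ w : List ℕ, (∀ j ∈ w, j < m) ∧ |compS T w 0 - x| ≤ ρ ^ k := by
  obtain ⟨w, hwl, hwv, y, hy, hcy⟩ := lz_cover hL k x hx
  refine ⟨w, hwv, ?_⟩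
  have h1 : dist (compS T w 0) (compS T w y) = ratioProd rT w * dist 0 y :=
    compS_dist hL.1.2.1 w hwv 0 y
  have h2 : dist (0:ℝ) y ≤ 1 := by
    rw [Real.dist_eq]
    rw [abs_of_nonpos (by linarith [hy.1])]
    linarith [hy.2]
  have h3 : ratioProd rT w ≤ ρ ^ k := by
    rw [← hwl]; exact ratioProd_le_pow hL.1.2.1 hρ w hwv
  have h4 : 0 < ratioProd rT w := ratioProd_pos hL.1.2.1 w hwv
  calc |compS T w 0 - x| = dist (compS T w 0) (compS T w y) := by rw [hcy, Real.dist_eq]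
    _ = ratioProd rT w * dist 0 y := h1
    _ ≤ ρ ^ k * 1 := mul_le_mul h3 h2 dist_nonneg (le_trans h4.le h3)
    _ = ρ ^ k := mul_one _

end LZWords

section Conj

/-- the point `0` of `[0,1]` -/
def pt0 : ↥(Icc (0:ℝ) 1) := ⟨0, by norm_num⟩
/-- the point `1` of `[0,1]` -/
def pt1 : ↥(Icc (0:ℝ) 1) := ⟨1, by norm_num⟩

/-- one piece of the gluing operator -/
noncomputable def pieceTerm (rT rT' t : ℕ → ℝ) (ε : ℕ → ℕ) (q : ↥(Icc (0:ℝ) 1) → ℝ)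
    (i : ℕ) (x : ℝ) : ℝ :=
  rT' i * (if ε i = 0 then q (projIcc 0 1 zero_le_one ((x - t i) / rT i))
           else 1 - q (projIcc 0 1 zero_le_one (1 - (x - t i) / rT i)))

/-- the gluing operator -/
noncomputable def PhiFun (m : ℕ) (rT rT' t : ℕ → ℝ) (ε : ℕ → ℕ)
    (q : ↥(Icc (0:ℝ) 1) → ℝ) (x : ℝ) : ℝ :=
  ∑ i ∈ Finset.range m, pieceTerm rT rT' t ε q i x

variable {m : ℕ} {T T' : ℕ → ℝ → ℝ} {rT rT' t t' : ℕ → ℝ} {ε : ℕ → ℕ}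

lemma pieceTerm_of_le (hL : IsLinearZipper m T rT t ε) {q : ↥(Icc (0:ℝ) 1) → ℝ}
    (hq0 : q pt0 = 0) (hq1 : q pt1 = 1) {i : ℕ} (hi : i < m) {x : ℝ} (hx : x ≤ t i) :
    pieceTerm rT rT' t ε q i x = 0 := by
  have hr0 : 0 < rT i := (hL.1.2.1 i hi).1
  have hdiv : (x - t i) / rT i ≤ 0 := by
    rw [div_nonpos_iff]
    right
    exact ⟨by linarith, hr0.le⟩
  unfold pieceTerm
  by_cases he : ε i = 0
  · rw [if_pos he, projIcc_of_le_left _ hdiv]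
    have : q ⟨0, left_mem_Icc.2 zero_le_one⟩ = 0 := hq0
    rw [this, mul_zero]
  · rw [if_neg he, projIcc_of_right_le _ (by linarith)]
    have : q ⟨1, right_mem_Icc.2 zero_le_one⟩ = 1 := hq1
    rw [this]
    ring

lemma pieceTerm_of_ge (hL : IsLinearZipper m T rT t ε) {q : ↥(Icc (0:ℝ) 1) → ℝ}
    (hq0 : q pt0 = 0) (hq1 : q pt1 = 1) {i : ℕ} (hi : i < m) {x : ℝ} (hx : t (i + 1) ≤ x) :
    pieceTerm rT rT' t ε q i x = rT' i := by
  have hr0 : 0 < rT i := (hL.1.2.1 i hi).1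
  have hrr : rT i = t (i + 1) - t i := lz_ratio hL hi
  have hdiv : 1 ≤ (x - t i) / rT i := by
    rw [le_div_iff₀ hr0]
    nlinarith
  unfold pieceTerm
  by_cases he : ε i = 0
  · rw [if_pos he, projIcc_of_right_le _ hdiv]
    have : q ⟨1, right_mem_Icc.2 zero_le_one⟩ = 1 := hq1
    rw [this, mul_one]
  · rw [if_neg he, projIcc_of_le_left _ (by linarith)]
    have : q ⟨0, left_mem_Icc.2 zero_le_one⟩ = 0 := hq0
    rw [this]
    ring

lemma lz_vertex_sum (hL' : IsLinearZipper m T' rT' t' ε) :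
    ∀ j, j ≤ m → ∑ i ∈ Finset.range j, rT' i = t' j := by
  intro j
  induction j with
  | zero => intro _; simp [hL'.2.1]
  | succ j ih =>
    intro hj
    have hjm : j < m := hj
    rw [Finset.sum_range_succ, ih (le_of_lt hjm), lz_ratio hL' hjm]
    ring

lemma PhiFun_zero (hL : IsLinearZipper m T rT t ε) {q : ↥(Icc (0:ℝ) 1) → ℝ}
    (hq0 : q pt0 = 0) (hq1 : q pt1 = 1) : PhiFun m rT rT' t ε q 0 = 0 := by
  unfold PhiFun
  refine Finset.sum_eq_zero fun i hi => ?_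
  have him : i < m := Finset.mem_range.mp hi
  exact pieceTerm_of_le hL hq0 hq1 him (lz_t_mem hL him.le).1

lemma PhiFun_one (hL : IsLinearZipper m T rT t ε) (hL' : IsLinearZipper m T' rT' t' ε)
    {q : ↥(Icc (0:ℝ) 1) → ℝ}
    (hq0 : q pt0 = 0) (hq1 : q pt1 = 1) : PhiFun m rT rT' t ε q 1 = 1 := by
  unfold PhiFun
  have : ∀ i ∈ Finset.range m, pieceTerm rT rT' t ε q i 1 = rT' i := by
    intro i hi
    have him : i < m := Finset.mem_range.mp hi
    exact pieceTerm_of_ge hL hq0 hq1 him (lz_t_mem hL him).2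
  rw [Finset.sum_congr rfl this, lz_vertex_sum hL' m le_rfl, hL'.2.2.1]

/-- the key semiconjugacy computation -/
lemma PhiFun_conj (hL : IsLinearZipper m T rT t ε) (hL' : IsLinearZipper m T' rT' t' ε)
    {q : ↥(Icc (0:ℝ) 1) → ℝ} (hq0 : q pt0 = 0) (hq1 : q pt1 = 1)
    {j : ℕ} (hj : j < m) {x : ℝ} (hx : x ∈ Icc (0:ℝ) 1) :
    PhiFun m rT rT' t ε q (T j x) = T' j (q ⟨x, hx⟩) := by
  have hTx := lz_mem_piece hL hj hx
  have hr0 : 0 < rT j := (hL.1.2.1 j hj).1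
  have hrr : rT j = t (j + 1) - t j := lz_ratio hL hj
  have hrr' : rT' j = t' (j + 1) - t' j := lz_ratio hL' hj
  set M := pieceTerm rT rT' t ε q j (T j x) with hM
  have hsum : PhiFun m rT rT' t ε q (T j x) = t' j + M := by
    unfold PhiFun
    have hcongr : ∀ i ∈ Finset.range m, pieceTerm rT rT' t ε q i (T j x) =
        (if i < j then rT' i else if i = j then M else 0) := by
      intro i hi
      have him : i < m := Finset.mem_range.mp hi
      rcases lt_trichotomy i j with h | h | h
      · rw [if_pos h]
        refine pieceTerm_of_ge hL hq0 hq1 him ?_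
        exact le_trans (lz_t_mono hL h hj.le) hTx.1
      · rw [if_neg (by omega), if_pos h, h]
      · rw [if_neg (by omega), if_neg (by omega)]
        refine pieceTerm_of_le hL hq0 hq1 him ?_
        exact le_trans hTx.2 (lz_t_mono hL h him.le)
    rw [Finset.sum_congr rfl hcongr]
    have hsub : Finset.range (j + 1) ⊆ Finset.range m := by
      intro i hi
      rw [Finset.mem_range] at *
      omega
    rw [← Finset.sum_subset hsub (by intro i _ hnot; rw [Finset.mem_range] at hnot
                                     rw [if_neg (by omega), if_neg (by omega)])]
    rw [Finset.sum_range_succ, if_neg (lt_irrefl j), if_pos rfl]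
    have : ∀ i ∈ Finset.range j, (if i < j then rT' i else if i = j then M else 0) = rT' i := by
      intro i hi
      rw [if_pos (Finset.mem_range.mp hi)]
    rw [Finset.sum_congr rfl this, lz_vertex_sum hL' j hj.le]
  rw [hsum]
  rcases lz_affine hL hj with ⟨he, hf⟩ | ⟨he, hf⟩
  · -- ε j = 0
    have hdiv : (T j x - t j) / rT j = x := by
      rw [hf]
      field_simp
      ring
    have hM' : M = rT' j * q ⟨x, hx⟩ := by
      rw [hM]
      unfold pieceTerm
      rw [if_pos he, hdiv, projIcc_of_mem _ hx]
    rcases lz_affine hL' hj with ⟨_, hf'⟩ | ⟨he', _⟩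
    · rw [hM', hf']
    · rw [he] at he'; exact absurd he' (by norm_num)
  · -- ε j = 1
    have hdiv : 1 - (T j x - t j) / rT j = x := by
      have h1 : T j x - t j = rT j * (1 - x) := by rw [hf, hrr]; ring
      have h2 : rT j * (1 - x) / rT j = 1 - x := by
        rw [mul_comm, mul_div_assoc, div_self hr0.ne', mul_one]
      rw [h1, h2]
      ring
    have hM' : M = rT' j * (1 - q ⟨x, hx⟩) := by
      rw [hM]
      unfold pieceTerm
      rw [if_neg (by omega), hdiv, projIcc_of_mem _ hx]
    rcases lz_affine hL' hj with ⟨he', _⟩ | ⟨_, hf'⟩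
    · rw [he'] at he; exact absurd he (by norm_num)
    · rw [hM', hf', hrr']
      ring

/-- the contraction estimate -/
lemma PhiFun_dist (hL : IsLinearZipper m T rT t ε) (hL' : IsLinearZipper m T' rT' t' ε)
    {q k : ↥(Icc (0:ℝ) 1) → ℝ} (hq0 : q pt0 = 0) (hq1 : q pt1 = 1)
    (hk0 : k pt0 = 0) (hk1 : k pt1 = 1)
    {ρ : ℝ} (hρ : ∀ i < m, rT' i ≤ ρ) {D : ℝ} (hD0 : 0 ≤ D)
    (hD : ∀ p : ↥(Icc (0:ℝ) 1), |q p - k p| ≤ D) {x : ℝ} (hx : x ∈ Icc (0:ℝ) 1) :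
    |PhiFun m rT rT' t ε q x - PhiFun m rT rT' t ε k x| ≤ ρ * D := by
  obtain ⟨j, hj, hxl, hxr⟩ := lz_piece_exists hL hx
  have hρ0 : 0 ≤ ρ := le_trans (hL'.1.2.1 j hj).1.le (hρ j hj)
  have hsub : PhiFun m rT rT' t ε q x - PhiFun m rT rT' t ε k x =
      pieceTerm rT rT' t ε q j x - pieceTerm rT rT' t ε k j x := by
    unfold PhiFun
    rw [← Finset.sum_sub_distrib]
    refine Finset.sum_eq_single j (fun i hi hne => ?_) (fun h => absurd (Finset.mem_range.mpr hj) h)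
    have him : i < m := Finset.mem_range.mp hi
    rcases lt_or_gt_of_ne hne with h | h
    · rw [pieceTerm_of_ge hL hq0 hq1 him (le_trans (lz_t_mono hL h hj.le) hxl),
        pieceTerm_of_ge hL hk0 hk1 him (le_trans (lz_t_mono hL h hj.le) hxl), sub_self]
    · rw [pieceTerm_of_le hL hq0 hq1 him (le_trans hxr (lz_t_mono hL h him.le)),
        pieceTerm_of_le hL hk0 hk1 him (le_trans hxr (lz_t_mono hL h him.le)), sub_self]
  rw [hsub]
  have hr'0 : 0 ≤ rT' j := (hL'.1.2.1 j hj).1.le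
  unfold pieceTerm
  by_cases he : ε j = 0
  · rw [if_pos he, if_pos he]
    set p := projIcc 0 1 zero_le_one ((x - t j) / rT j)
    have : rT' j * q p - rT' j * k p = rT' j * (q p - k p) := by ring
    rw [this, abs_mul, abs_of_nonneg hr'0]
    exact mul_le_mul (hρ j hj) (hD p) (abs_nonneg _) hρ0
  · rw [if_neg he, if_neg he]
    set p := projIcc 0 1 zero_le_one (1 - (x - t j) / rT j)
    have : rT' j * (1 - q p) - rT' j * (1 - k p) = rT' j * (k p - q p) := by ring
    rw [this, abs_mul, abs_of_nonneg hr'0]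
    have : |k p - q p| = |q p - k p| := abs_sub_comm _ _
    rw [this]
    exact mul_le_mul (hρ j hj) (hD p) (abs_nonneg _) hρ0

lemma PhiFun_continuous (hL : IsLinearZipper m T rT t ε) {q : ↥(Icc (0:ℝ) 1) → ℝ}
    (hq : Continuous q) : Continuous (PhiFun m rT rT' t ε q) := by
  unfold PhiFun
  refine continuous_finset_sum _ fun i _ => ?_
  unfold pieceTerm
  by_cases he : ε i = 0
  · simp only [if_pos he]
    exact continuous_const.mul (hq.comp (continuous_projIcc.comp (by fun_prop)))
  · simp only [if_neg he]
    exact continuous_const.mul (continuous_const.sub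
      (hq.comp (continuous_projIcc.comp (by fun_prop))))

lemma PhiFun_monotone (hL : IsLinearZipper m T rT t ε) (hL' : IsLinearZipper m T' rT' t' ε)
    {q : ↥(Icc (0:ℝ) 1) → ℝ} (hq : Monotone q) : Monotone (PhiFun m rT rT' t ε q) := by
  intro x y hxy
  refine Finset.sum_le_sum fun i hi => ?_
  have him : i < m := Finset.mem_range.mp hi
  have hr0 : 0 < rT i := (hL.1.2.1 i him).1
  have hr'0 : 0 ≤ rT' i := (hL'.1.2.1 i him).1.le
  have hdiv : (x - t i) / rT i ≤ (y - t i) / rT i := by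
    gcongr <;> linarith [hr0]
  unfold pieceTerm
  by_cases he : ε i = 0
  · rw [if_pos he, if_pos he]
    exact mul_le_mul_of_nonneg_left (hq (monotone_projIcc zero_le_one hdiv)) hr'0
  · rw [if_neg he, if_neg he]
    refine mul_le_mul_of_nonneg_left ?_ hr'0
    have := hq (monotone_projIcc zero_le_one
      (by linarith : 1 - (y - t i) / rT i ≤ 1 - (x - t i) / rT i))
    linarith

/-- existence of the conjugating map between two linear zippers with the same signature -/
lemma exists_conj (hL : IsLinearZipper m T rT t ε) (hL' : IsLinearZipper m T' rT' t' ε) :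
    ∃ h : ℝ → ℝ, Continuous h ∧ Monotone h ∧ h 0 = 0 ∧ h 1 = 1 ∧
      ∀ i < m, ∀ x ∈ Icc (0:ℝ) 1, h (T i x) = T' i (h x) := by
  classical
  obtain ⟨ρ, hρ0, hρ1, hρle⟩ := exists_rho hL'.1.2.1 hL'.1.1
  set A : Set C(↥(Icc (0:ℝ) 1), ℝ) := {f | f pt0 = 0 ∧ f pt1 = 1} with hA
  have hAclosed : IsClosed A := by
    have h1 : IsClosed {f : C(↥(Icc (0:ℝ) 1), ℝ) | f pt0 = 0} :=
      isClosed_eq (continuous_eval_const pt0) continuous_const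
    have h2 : IsClosed {f : C(↥(Icc (0:ℝ) 1), ℝ) | f pt1 = 1} :=
      isClosed_eq (continuous_eval_const pt1) continuous_const
    exact h1.inter h2
  haveI : CompleteSpace ↥A := hAclosed.completeSpace_coe
  haveI : Nonempty ↥A := ⟨⟨⟨fun u => (u : ℝ), continuous_subtype_val⟩, rfl, rfl⟩⟩
  set Φ : ↥A → ↥A := fun q =>
    ⟨⟨fun u => PhiFun m rT rT' t ε q.1 (u : ℝ),
      (PhiFun_continuous hL q.1.continuous).comp continuous_subtype_val⟩,
      PhiFun_zero hL q.2.1 q.2.2, PhiFun_one hL hL' q.2.1 q.2.2⟩ with hΦ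
  have hlip : LipschitzWith ⟨ρ, hρ0.le⟩ Φ := by
    refine LipschitzWith.of_dist_le_mul fun q k => ?_
    have hnn : (0:ℝ) ≤ ρ * dist q k := mul_nonneg hρ0.le dist_nonneg
    rw [Subtype.dist_eq]
    refine (ContinuousMap.dist_le hnn).2 fun u => ?_
    rw [Real.dist_eq]
    show |PhiFun m rT rT' t ε q.1 (u:ℝ) - PhiFun m rT rT' t ε k.1 (u:ℝ)| ≤ ρ * dist q k
    refine PhiFun_dist hL hL' q.2.1 q.2.2 k.2.1 k.2.2 hρle dist_nonneg
      (fun p => ?_) u.2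
    rw [← Real.dist_eq]
    calc dist (q.1 p) (k.1 p) ≤ dist q.1 k.1 := ContinuousMap.dist_apply_le_dist p
      _ = dist q k := (Subtype.dist_eq q k).symm
  have hcontr : ContractingWith ⟨ρ, hρ0.le⟩ Φ := by
    refine ⟨?_, hlip⟩
    apply NNReal.coe_lt_coe.mp
    exact_mod_cast hρ1
  set F := ContractingWith.fixedPoint Φ hcontr with hFdef
  have hFfix : Φ F = F := hcontr.fixedPoint_isFixedPt
  -- monotonicity of the fixed point
  set Mset : Set ↥A := {q | Monotone ⇑q.1} with hMset
  have hMclosed : IsClosed Mset := by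
    have : Mset = ⋂ (p : ↥(Icc (0:ℝ) 1) × ↥(Icc (0:ℝ) 1)) (_ : p.1 ≤ p.2),
        {q : ↥A | q.1 p.1 ≤ q.1 p.2} := by
      ext q
      simp only [hMset, mem_setOf_eq, mem_iInter]
      exact ⟨fun hq p hp => hq hp, fun hq u v huv => hq (u, v) huv⟩
    rw [this]
    exact isClosed_iInter fun p => isClosed_iInter fun _ =>
      isClosed_le ((continuous_eval_const p.1).comp continuous_subtype_val)
        ((continuous_eval_const p.2).comp continuous_subtype_val)
  have hMinv : ∀ q, q ∈ Mset → Φ q ∈ Mset := by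
    intro q hq
    intro u v huv
    exact PhiFun_monotone hL hL' hq (Subtype.coe_le_coe.mpr huv)
  set e : ↥A := ⟨⟨fun u => (u : ℝ), continuous_subtype_val⟩, rfl, rfl⟩ with he
  have heM : e ∈ Mset := fun u v huv => Subtype.coe_le_coe.mpr huv
  have hiter : ∀ n, Φ^[n] e ∈ Mset := by
    intro n
    induction n with
    | zero => exact heM
    | succ n ih => rw [Function.iterate_succ_apply']; exact hMinv _ ih
  have hFM : F ∈ Mset :=
    hMclosed.mem_of_tendsto (hcontr.tendsto_iterate_fixedPoint e)
      (Filter.Eventually.of_forall hiter)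
  -- the conjugating map
  refine ⟨fun x => F.1 (projIcc 0 1 zero_le_one x), ?_, ?_, ?_, ?_, ?_⟩
  · exact F.1.continuous.comp continuous_projIcc
  · exact hFM.comp (monotone_projIcc zero_le_one)
  · show (F.1 (projIcc 0 1 zero_le_one (0:ℝ)) : ℝ) = 0
    rw [projIcc_left]; exact F.2.1
  · show (F.1 (projIcc 0 1 zero_le_one (1:ℝ)) : ℝ) = 1
    rw [projIcc_right]; exact F.2.2
  · intro i hi x hx
    have hTx : T i x ∈ Icc (0:ℝ) 1 := lz_mapsTo hL hi hx
    show (F.1 (projIcc 0 1 zero_le_one (T i x)) : ℝ) = T' i (F.1 (projIcc 0 1 zero_le_one x))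
    rw [projIcc_of_mem _ hTx, projIcc_of_mem _ hx]
    have h1 : F.1 ⟨T i x, hTx⟩ = (Φ F).1 ⟨T i x, hTx⟩ := by rw [hFfix]
    rw [h1]
    exact PhiFun_conj hL hL' F.2.1 F.2.2 hi hx

end Conj

section ConjProps

variable {m : ℕ} {T T' : ℕ → ℝ → ℝ} {rT rT' t t' : ℕ → ℝ} {ε : ℕ → ℕ}

lemma conj_word (hL : IsLinearZipper m T rT t ε) {φ : ℝ → ℝ}
    (hφ : ∀ i < m, ∀ x ∈ Icc (0:ℝ) 1, φ (T i x) = T' i (φ x)) :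
    ∀ w : List ℕ, (∀ j ∈ w, j < m) → ∀ x ∈ Icc (0:ℝ) 1,
      φ (compS T w x) = compS T' w (φ x) := by
  intro w
  induction w with
  | nil => intro _ x _; rfl
  | cons i l ih =>
    intro hv x hx
    have hi : i < m := hv i (List.mem_cons_self)
    have hl : ∀ j ∈ l, j < m := fun j hj => hv j (List.mem_cons_of_mem i hj)
    show φ (T i (compS T l x)) = T' i (compS T' l (φ x))
    rw [hφ i hi _ (lz_compS_mapsTo hL l hl hx), ih hl x hx]

lemma conj_strictMonoOn (hL : IsLinearZipper m T rT t ε) (hL' : IsLinearZipper m T' rT' t' ε)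
    {h : ℝ → ℝ} (hm : Monotone h) (h0 : h 0 = 0) (h1 : h 1 = 1)
    (hconj : ∀ i < m, ∀ x ∈ Icc (0:ℝ) 1, h (T i x) = T' i (h x)) :
    StrictMonoOn h (Icc (0:ℝ) 1) := by
  obtain ⟨ρ, hρ0, hρ1, hρle⟩ := exists_rho hL.1.2.1 hL.1.1
  intro a ha b hb hab
  have h0I : (0:ℝ) ∈ Icc (0:ℝ) 1 := by norm_num
  have h1I : (1:ℝ) ∈ Icc (0:ℝ) 1 := by norm_num
  have hcI : (a + b) / 2 ∈ Icc (0:ℝ) 1 := ⟨by linarith [ha.1], by linarith [hb.2]⟩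
  obtain ⟨k, hk⟩ := exists_pow_lt_of_lt_one (by linarith : (0:ℝ) < (b - a) / 2) hρ1
  obtain ⟨w, hwl, hwv, y, hy, hcy⟩ := lz_cover hL k ((a + b) / 2) hcI
  have hρk : ratioProd rT w ≤ ρ ^ k := by
    rw [← hwl]; exact ratioProd_le_pow hL.1.2.1 hρle w hwv
  set u := compS T w 0 with hu
  set v := compS T w 1 with hv
  have hdistu : |u - (a + b) / 2| ≤ ρ ^ k := by
    have h1' : dist u (compS T w y) = ratioProd rT w * dist 0 y :=
      compS_dist hL.1.2.1 w hwv 0 y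
    have h2' : dist (0:ℝ) y ≤ 1 := by
      rw [Real.dist_eq, abs_of_nonpos (by linarith [hy.1])]; linarith [hy.2]
    calc |u - (a + b) / 2| = dist u (compS T w y) := by rw [hcy, Real.dist_eq]
      _ = ratioProd rT w * dist 0 y := h1'
      _ ≤ ρ ^ k * 1 := mul_le_mul hρk h2' dist_nonneg
          (le_trans (ratioProd_pos hL.1.2.1 w hwv).le hρk)
      _ = ρ ^ k := mul_one _
  have hdistv : |v - (a + b) / 2| ≤ ρ ^ k := by
    have h1' : dist v (compS T w y) = ratioProd rT w * dist 1 y :=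
      compS_dist hL.1.2.1 w hwv 1 y
    have h2' : dist (1:ℝ) y ≤ 1 := by
      rw [Real.dist_eq, abs_of_nonneg (by linarith [hy.2])]; linarith [hy.1]
    calc |v - (a + b) / 2| = dist v (compS T w y) := by rw [hcy, Real.dist_eq]
      _ = ratioProd rT w * dist 1 y := h1'
      _ ≤ ρ ^ k * 1 := mul_le_mul hρk h2' dist_nonneg
          (le_trans (ratioProd_pos hL.1.2.1 w hwv).le hρk)
      _ = ρ ^ k := mul_one _
  have hau : a < u := by
    have := abs_le.mp hdistu
    linarith [this.1]
  have hub : u < b := by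
    have := abs_le.mp hdistu
    linarith [this.2]
  have hav : a < v := by
    have := abs_le.mp hdistv
    linarith [this.1]
  have hvb : v < b := by
    have := abs_le.mp hdistv
    linarith [this.2]
  have hhu : h u = compS T' w 0 := by
    rw [hu, conj_word hL hconj w hwv 0 h0I, h0]
  have hhv : h v = compS T' w 1 := by
    rw [hv, conj_word hL hconj w hwv 1 h1I, h1]
  have hd01 : dist (0:ℝ) 1 = 1 := by simp [Real.dist_eq]
  have hne : h u ≠ h v := by
    rw [hhu, hhv]
    intro hcon
    have hd := compS_dist hL'.1.2.1 w hwv (0:ℝ) (1:ℝ)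
    rw [hcon, dist_self, hd01, mul_one] at hd
    exact (ratioProd_pos hL'.1.2.1 w hwv).ne' hd.symm
  have main : ∀ {p P : ℝ}, a < p → p < P → P < b → h p ≠ h P → h a < h b := by
    intro p P hp hpP hPb hnepq
    have h1' : h p < h P := lt_of_le_of_ne (hm hpP.le) hnepq
    have h2' : h a ≤ h p := hm hp.le
    have h3' : h P ≤ h b := hm hPb.le
    linarith
  have huv : u ≠ v := by
    intro hcon
    have hd := compS_dist hL.1.2.1 w hwv (0:ℝ) (1:ℝ)
    rw [show compS T w (0:ℝ) = u from rfl, show compS T w (1:ℝ) = v from rfl,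
      hcon, dist_self, hd01, mul_one] at hd
    exact (ratioProd_pos hL.1.2.1 w hwv).ne' hd.symm
  rcases lt_or_gt_of_ne huv with hlt | hgt
  · exact main hau hlt hvb hne
  · exact main hav hgt hub (Ne.symm hne)

lemma conj_mapsTo {h : ℝ → ℝ} (hm : Monotone h) (h0 : h 0 = 0) (h1 : h 1 = 1) :
    MapsTo h (Icc (0:ℝ) 1) (Icc (0:ℝ) 1) := by
  intro x hx
  exact ⟨h0 ▸ hm hx.1, h1 ▸ hm hx.2⟩

lemma conj_image {h : ℝ → ℝ} (hc : Continuous h) (hm : Monotone h)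
    (h0 : h 0 = 0) (h1 : h 1 = 1) : h '' Icc (0:ℝ) 1 = Icc (0:ℝ) 1 := by
  apply Subset.antisymm
  · exact image_subset_iff.mpr (conj_mapsTo hm h0 h1)
  · have := intermediate_value_Icc (zero_le_one (α := ℝ)) hc.continuousOn
    rw [h0, h1] at this
    exact this

/-- uniqueness of the semiconjugacy, given the value at `0`. -/
lemma conj_unique (hL : IsLinearZipper m T rT t ε) {φ ψ : ℝ → ℝ}
    (hφc : ContinuousOn φ (Icc 0 1)) (hψc : ContinuousOn ψ (Icc 0 1))
    (hφ : ∀ i < m, ∀ x ∈ Icc (0:ℝ) 1, φ (T i x) = T' i (φ x))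
    (hψ : ∀ i < m, ∀ x ∈ Icc (0:ℝ) 1, ψ (T i x) = T' i (ψ x))
    (h00 : φ 0 = ψ 0) : EqOn φ ψ (Icc (0:ℝ) 1) := by
  obtain ⟨ρ, hρ0, hρ1, hρle⟩ := exists_rho hL.1.2.1 hL.1.1
  intro x hx
  by_contra hne
  have hd0 : 0 < dist (φ x) (ψ x) := dist_pos.mpr hne
  obtain ⟨δ1, hδ1, hδ1p⟩ := Metric.continuousWithinAt_iff.mp (hφc x hx)
    (dist (φ x) (ψ x) / 2) (by linarith)
  obtain ⟨δ2, hδ2, hδ2p⟩ := Metric.continuousWithinAt_iff.mp (hψc x hx)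
    (dist (φ x) (ψ x) / 2) (by linarith)
  obtain ⟨k, hk⟩ := exists_pow_lt_of_lt_one (lt_min hδ1 hδ2) hρ1
  obtain ⟨w, hwv, hwd⟩ := lz_dense hL hρle k hx
  set p := compS T w 0 with hp
  have h0I : (0:ℝ) ∈ Icc (0:ℝ) 1 := by norm_num
  have hpI : p ∈ Icc (0:ℝ) 1 := lz_compS_mapsTo hL w hwv h0I
  have hpx : dist p x < min δ1 δ2 := by
    rw [Real.dist_eq]; exact lt_of_le_of_lt hwd hk
  have hmid : φ p = ψ p := by
    rw [hp, conj_word hL hφ w hwv 0 h0I, conj_word hL hψ w hwv 0 h0I, h00]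
  have e1 : dist (φ p) (φ x) < dist (φ x) (ψ x) / 2 :=
    hδ1p hpI (lt_of_lt_of_le hpx (min_le_left _ _))
  have e2 : dist (ψ p) (ψ x) < dist (φ x) (ψ x) / 2 :=
    hδ2p hpI (lt_of_lt_of_le hpx (min_le_right _ _))
  have htri : dist (φ x) (ψ x) ≤ dist (φ x) (φ p) + dist (ψ p) (ψ x) := by
    calc dist (φ x) (ψ x) ≤ dist (φ x) (φ p) + dist (φ p) (ψ x) := dist_triangle _ _ _
      _ = dist (φ x) (φ p) + dist (ψ p) (ψ x) := by rw [hmid]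
  rw [dist_comm (φ x) (φ p)] at htri
  linarith

/-- any conjugating embedding of `[0,1]` onto itself fixes `0`. -/
lemma conj_fix_zero (hL : IsLinearZipper m T rT t ε) (hL' : IsLinearZipper m T' rT' t' ε)
    {φ : ℝ → ℝ} (hc : ContinuousOn φ (Icc 0 1)) (hinj : InjOn φ (Icc (0:ℝ) 1))
    (him : φ '' Icc (0:ℝ) 1 = Icc (0:ℝ) 1)
    (hconj : ∀ i < m, ∀ x ∈ Icc (0:ℝ) 1, φ (T i x) = T' i (φ x)) : φ 0 = 0 := by
  have h0m : 0 < m := hL.1.1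
  have h0I : (0:ℝ) ∈ Icc (0:ℝ) 1 := by norm_num
  have h1I : (1:ℝ) ∈ Icc (0:ℝ) 1 := by norm_num
  obtain ⟨y0, hy0I, hy0v⟩ : ∃ y ∈ Icc (0:ℝ) 1, φ y = 0 := by
    have : (0:ℝ) ∈ φ '' Icc (0:ℝ) 1 := by rw [him]; exact h0I
    obtain ⟨y, hy, hyv⟩ := this
    exact ⟨y, hy, hyv⟩
  obtain ⟨y1, hy1I, hy1v⟩ : ∃ y ∈ Icc (0:ℝ) 1, φ y = 1 := by
    have : (1:ℝ) ∈ φ '' Icc (0:ℝ) 1 := by rw [him]; exact h1I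
    obtain ⟨y, hy, hyv⟩ := this
    exact ⟨y, hy, hyv⟩
  have hsub : uIcc y0 y1 ⊆ Icc (0:ℝ) 1 := by
    intro u hu
    rw [mem_uIcc] at hu
    rcases hu with ⟨hu1, hu2⟩ | ⟨hu1, hu2⟩ <;>
      exact ⟨by linarith [hy0I.1, hy1I.1], by linarith [hy0I.2, hy1I.2]⟩
  have h01 : φ 0 = 0 ∨ φ 0 = 1 := by
    by_contra hcon
    push_neg at hcon
    have hφ0 : φ 0 ∈ Icc (0:ℝ) 1 := him ▸ mem_image_of_mem φ h0I
    have h0lt : 0 < φ 0 := lt_of_le_of_ne hφ0.1 (Ne.symm hcon.1)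
    have h1gt : φ 0 < 1 := lt_of_le_of_ne hφ0.2 hcon.2
    have hy0ne : y0 ≠ 0 := by
      intro h; rw [h] at hy0v; exact hcon.1 hy0v
    have hy1ne : y1 ≠ 0 := by
      intro h; rw [h] at hy1v; exact hcon.2 hy1v
    have hy0pos : 0 < y0 := lt_of_le_of_ne hy0I.1 (Ne.symm hy0ne)
    have hy1pos : 0 < y1 := lt_of_le_of_ne hy1I.1 (Ne.symm hy1ne)
    have hmem : φ 0 ∈ uIcc (φ y0) (φ y1) := by
      rw [hy0v, hy1v, mem_uIcc]
      left
      exact ⟨h0lt.le, h1gt.le⟩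
    obtain ⟨c, hcI, hcv⟩ := intermediate_value_uIcc (hc.mono hsub) hmem
    have hcne : c ≠ 0 := by
      intro h
      rw [mem_uIcc] at hcI
      rcases hcI with ⟨hc1, _⟩ | ⟨hc1, _⟩ <;> (rw [h] at hc1; linarith)
    exact hcne (hinj (hsub hcI) h0I hcv)
  rcases h01 with h | h
  · exact h
  · exfalso
    -- φ 0 = 1 ; first derive φ 1 = 0
    have h11 : φ 1 = 0 ∨ φ 1 = 1 := by
      by_contra hcon
      push_neg at hcon
      have hφ1 : φ 1 ∈ Icc (0:ℝ) 1 := him ▸ mem_image_of_mem φ h1I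
      have h0lt : 0 < φ 1 := lt_of_le_of_ne hφ1.1 (Ne.symm hcon.1)
      have h1gt : φ 1 < 1 := lt_of_le_of_ne hφ1.2 hcon.2
      have hy0ne : y0 ≠ 1 := by
        intro hh; rw [hh] at hy0v; exact hcon.1 hy0v
      have hy1ne : y1 ≠ 1 := by
        intro hh; rw [hh] at hy1v; exact hcon.2 hy1v
      have hy0lt : y0 < 1 := lt_of_le_of_ne hy0I.2 hy0ne
      have hy1lt : y1 < 1 := lt_of_le_of_ne hy1I.2 hy1ne
      have hmem : φ 1 ∈ uIcc (φ y0) (φ y1) := by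
        rw [hy0v, hy1v, mem_uIcc]
        left
        exact ⟨h0lt.le, h1gt.le⟩
      obtain ⟨c, hcI, hcv⟩ := intermediate_value_uIcc (hc.mono hsub) hmem
      have hcne : c ≠ 1 := by
        intro hh
        rw [mem_uIcc] at hcI
        rcases hcI with ⟨_, hc2⟩ | ⟨_, hc2⟩ <;> (rw [hh] at hc2; linarith)
      exact hcne (hinj (hsub hcI) h1I hcv)
    have hφ1 : φ 1 = 0 := by
      rcases h11 with h' | h'
      · exact h'
      · exfalso
        have := hinj h0I h1I (by rw [h, h'])
        norm_num at this
    have hT1 := hconj 0 h0m 1 h1I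
    rw [hφ1] at hT1
    rcases lz_eps hL h0m with he | he
    · -- ε 0 = 0
      have hT01 : T 0 1 = t 1 := by rw [lz_T1 hL h0m, he]
      have hT'00 : T' 0 0 = t' 0 := by rw [lz_T0 hL' h0m, he]
      rw [hT01, hT'00, hL'.2.1] at hT1
      have ht1I : t 1 ∈ Icc (0:ℝ) 1 := lz_t_mem hL h0m
      have ht1 : t 1 = 1 := hinj ht1I h1I (by rw [hT1, hφ1])
      have hr := lz_ratio hL h0m
      have hrlt := (hL.1.2.1 0 h0m).2.1
      rw [hL.2.1] at hr
      rw [zero_add] at hr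
      linarith
    · -- ε 0 = 1
      have hT01 : T 0 1 = t 0 := by rw [lz_T1 hL h0m, he]
      have hT'00 : T' 0 0 = t' 1 := by rw [lz_T0 hL' h0m, he]
      rw [hT01, hL.2.1, hT'00] at hT1
      rw [h] at hT1
      have hr := lz_ratio hL' h0m
      have hrlt := (hL'.1.2.1 0 h0m).2.1
      rw [hL'.2.1] at hr
      rw [zero_add] at hr
      linarith

end ConjProps

section InvFun

/-- the inverse of a continuous injection on `[0,1]` is continuous on the image. -/
lemma continuousOn_invFunOn_of_injOn {X : Type*} [MetricSpace X] {g : ℝ → X}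
    (hc : ContinuousOn g (Icc 0 1)) (hinj : InjOn g (Icc (0:ℝ) 1)) :
    ContinuousOn (Function.invFunOn g (Icc 0 1)) (g '' Icc 0 1) := by
  classical
  set q : ↥(Icc (0:ℝ) 1) → ↥(g '' Icc 0 1) :=
    fun u => ⟨g u, mem_image_of_mem g u.2⟩ with hqdef
  have hqc : Continuous q := (hc.restrict).subtype_mk _
  have hbij : Function.Bijective q := by
    constructor
    · intro u v huv
      exact Subtype.ext (hinj u.2 v.2 (congrArg Subtype.val huv))
    · rintro ⟨y, hy⟩
      obtain ⟨u, hu, rfl⟩ := hy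
      exact ⟨⟨u, hu⟩, rfl⟩
  set e : ↥(Icc (0:ℝ) 1) ≃ ↥(g '' Icc 0 1) := Equiv.ofBijective q hbij with hedef
  have hec : Continuous e := hqc
  let homeo := hec.homeoOfEquivCompactToT2
  rw [continuousOn_iff_continuous_restrict]
  have hrestr : (g '' Icc 0 1).restrict (Function.invFunOn g (Icc 0 1)) =
      fun y => ((homeo.symm y : ↥(Icc (0:ℝ) 1)) : ℝ) := by
    funext y
    have hy : (y : X) ∈ g '' Icc 0 1 := y.2
    obtain ⟨u, hu, huv⟩ := hy
    have h1 : Function.invFunOn g (Icc 0 1) y ∈ Icc (0:ℝ) 1 :=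
      Function.invFunOn_mem ⟨u, hu, huv⟩
    have h2 : g (Function.invFunOn g (Icc 0 1) y) = y :=
      Function.invFunOn_eq ⟨u, hu, huv⟩
    have h3 : g ((homeo.symm y : ↥(Icc (0:ℝ) 1)) : ℝ) = y := by
      have := homeo.apply_symm_apply y
      exact congrArg Subtype.val this
    exact hinj h1 (homeo.symm y).2 (by rw [h2, h3])
  change Continuous ((g '' Icc 0 1).restrict (Function.invFunOn g (Icc 0 1)))
  rw [hrestr]
  exact continuous_subtype_val.comp homeo.symm.continuous

end InvFun

/-- for Jordan zippers with the same signature there is a unique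
homeomorphism of the attractors agreeing with the systems. -/
theorem agreeing_homeo_exists_unique {n : ℕ} (m : ℕ)
    (S S' : ℕ → EuclideanSpace ℝ (Fin n) → EuclideanSpace ℝ (Fin n)) (r r' : ℕ → ℝ)
    (z z' : ℕ → EuclideanSpace ℝ (Fin n)) (ε : ℕ → ℕ)
    (γ γ' : Set (EuclideanSpace ℝ (Fin n)))
    (hS : IsJordanZipper m S r z ε γ) (hS' : IsJordanZipper m S' r' z' ε γ') :
    ∃ f : EuclideanSpace ℝ (Fin n) → EuclideanSpace ℝ (Fin n),
      IsHomeoOnto γ γ' f ∧ Agrees m S S' γ f ∧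
        ∀ f', IsHomeoOnto γ γ' f' → Agrees m S S' γ f' → EqOn f f' γ := by
  classical
  obtain ⟨T, rT, t, g, hLg, hgsp, hginj, hgim⟩ := hS.2.2
  obtain ⟨T', rT', t', g', hLg', hgsp', hginj', hgim'⟩ := hS'.2.2
  obtain ⟨h, hhc, hhm, hh0, hh1, hhconj⟩ := exists_conj hLg hLg'
  have hhinj : InjOn h (Icc (0:ℝ) 1) :=
    (conj_strictMonoOn hLg hLg' hhm hh0 hh1 hhconj).injOn
  have hhmapsTo : MapsTo h (Icc (0:ℝ) 1) (Icc (0:ℝ) 1) := conj_mapsTo hhm hh0 hh1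
  have hhim : h '' Icc (0:ℝ) 1 = Icc (0:ℝ) 1 := conj_image hhc hhm hh0 hh1
  -- facts about g and its inverse
  have hgmapsTo : MapsTo g (Icc (0:ℝ) 1) γ := fun u hu => hgim ▸ mem_image_of_mem g hu
  have hg'mapsTo : MapsTo g' (Icc (0:ℝ) 1) γ' := fun u hu => hgim' ▸ mem_image_of_mem g' hu
  set gi := Function.invFunOn g (Icc 0 1) with hgidef
  set gi' := Function.invFunOn g' (Icc 0 1) with hgi'def
  have hgiL : ∀ u ∈ Icc (0:ℝ) 1, gi (g u) = u := fun u hu => hginj.leftInvOn_invFunOn hu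
  have hgi'L : ∀ u ∈ Icc (0:ℝ) 1, gi' (g' u) = u := fun u hu => hginj'.leftInvOn_invFunOn hu
  have hgiM : ∀ x ∈ γ, gi x ∈ Icc (0:ℝ) 1 := by
    intro x hx
    rw [← hgim] at hx
    obtain ⟨u, hu, huv⟩ := hx
    exact Function.invFunOn_mem ⟨u, hu, huv⟩
  have hgi'M : ∀ x ∈ γ', gi' x ∈ Icc (0:ℝ) 1 := by
    intro x hx
    rw [← hgim'] at hx
    obtain ⟨u, hu, huv⟩ := hx
    exact Function.invFunOn_mem ⟨u, hu, huv⟩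
  have hgiR : ∀ x ∈ γ, g (gi x) = x := by
    intro x hx
    rw [← hgim] at hx
    obtain ⟨u, hu, huv⟩ := hx
    exact Function.invFunOn_eq ⟨u, hu, huv⟩
  have hgi'R : ∀ x ∈ γ', g' (gi' x) = x := by
    intro x hx
    rw [← hgim'] at hx
    obtain ⟨u, hu, huv⟩ := hx
    exact Function.invFunOn_eq ⟨u, hu, huv⟩
  have hgiC : ContinuousOn gi γ := by
    have := continuousOn_invFunOn_of_injOn hgsp.1 hginj
    rwa [hgim] at this
  have hgi'C : ContinuousOn gi' γ' := by
    have := continuousOn_invFunOn_of_injOn hgsp'.1 hginj'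
    rwa [hgim'] at this
  -- the homeomorphism
  set f : EuclideanSpace ℝ (Fin n) → EuclideanSpace ℝ (Fin n) :=
    fun x => g' (h (gi x)) with hfdef
  refine ⟨f, ⟨?_, ?_, ?_⟩, ?_, ?_⟩
  · -- continuity
    have c1 : ContinuousOn (fun x => h (gi x)) γ := hhc.comp_continuousOn hgiC
    exact hgsp'.1.comp c1 (fun x hx => hhmapsTo (hgiM x hx))
  · -- injectivity
    intro x hx y hy hxy
    have e1 : h (gi x) = h (gi y) :=
      hginj' (hhmapsTo (hgiM x hx)) (hhmapsTo (hgiM y hy)) hxy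
    have e2 : gi x = gi y := hhinj (hgiM x hx) (hgiM y hy) e1
    calc x = g (gi x) := (hgiR x hx).symm
      _ = g (gi y) := by rw [e2]
      _ = y := hgiR y hy
  · -- image
    apply Subset.antisymm
    · rintro _ ⟨x, hx, rfl⟩
      exact hg'mapsTo (hhmapsTo (hgiM x hx))
    · intro ypt hy
      rw [← hgim'] at hy
      obtain ⟨v, hv, rfl⟩ := hy
      have : v ∈ h '' Icc (0:ℝ) 1 := by rw [hhim]; exact hv
      obtain ⟨u, hu, rfl⟩ := this
      refine ⟨g u, hgmapsTo hu, ?_⟩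
      show g' (h (gi (g u))) = g' (h u)
      rw [hgiL u hu]
  · -- agreement
    intro i hi x hx
    have hu : gi x ∈ Icc (0:ℝ) 1 := hgiM x hx
    have hgu : g (gi x) = x := hgiR x hx
    have hTu : T i (gi x) ∈ Icc (0:ℝ) 1 := lz_mapsTo hLg hi hu
    have hhu : h (gi x) ∈ Icc (0:ℝ) 1 := hhmapsTo hu
    show g' (h (gi (S i x))) = S' i (g' (h (gi x)))
    calc g' (h (gi (S i x))) = g' (h (gi (S i (g (gi x))))) := by rw [hgu]
      _ = g' (h (gi (g (T i (gi x))))) := by rw [hgsp.2.2 i hi _ hu]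
      _ = g' (h (T i (gi x))) := by rw [hgiL _ hTu]
      _ = g' (T' i (h (gi x))) := by rw [hhconj i hi _ hu]
      _ = S' i (g' (h (gi x))) := (hgsp'.2.2 i hi _ hhu).symm
  · -- uniqueness
    intro f' hf'h hf'a
    obtain ⟨hf'c, hf'inj, hf'im⟩ := hf'h
    have hf'maps : MapsTo f' γ γ' := fun x hx => hf'im ▸ mem_image_of_mem f' hx
    set φ : ℝ → ℝ := fun y => gi' (f' (g y)) with hφdef
    have hφI : ∀ y ∈ Icc (0:ℝ) 1, φ y ∈ Icc (0:ℝ) 1 :=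
      fun y hy => hgi'M _ (hf'maps (hgmapsTo hy))
    have hg'φ : ∀ y ∈ Icc (0:ℝ) 1, g' (φ y) = f' (g y) :=
      fun y hy => hgi'R _ (hf'maps (hgmapsTo hy))
    have hφc : ContinuousOn φ (Icc (0:ℝ) 1) :=
      hgi'C.comp (hf'c.comp hgsp.1 hgmapsTo) (fun y hy => hf'maps (hgmapsTo hy))
    have hφconj : ∀ i < m, ∀ y ∈ Icc (0:ℝ) 1, φ (T i y) = T' i (φ y) := by
      intro i hi y hy
      have hstep : f' (g (T i y)) = g' (T' i (φ y)) := by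
        rw [← hgsp.2.2 i hi y hy, hf'a i hi _ (hgmapsTo hy), ← hg'φ y hy,
          hgsp'.2.2 i hi _ (hφI y hy)]
      show gi' (f' (g (T i y))) = T' i (φ y)
      rw [hstep]
      exact hgi'L _ (lz_mapsTo hLg' hi (hφI y hy))
    have hφinj : InjOn φ (Icc (0:ℝ) 1) := by
      intro a ha b hb hab
      have e1 : g' (φ a) = g' (φ b) := by rw [hab]
      rw [hg'φ a ha, hg'φ b hb] at e1
      have e2 : g a = g b := hf'inj (hgmapsTo ha) (hgmapsTo hb) e1
      exact hginj ha hb e2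
    have hφim : φ '' Icc (0:ℝ) 1 = Icc (0:ℝ) 1 := by
      apply Subset.antisymm
      · rintro _ ⟨y, hy, rfl⟩
        exact hφI y hy
      · intro v hv
        have h1 : g' v ∈ γ' := hg'mapsTo hv
        rw [← hf'im] at h1
        obtain ⟨x, hx, hxv⟩ := h1
        rw [← hgim] at hx
        obtain ⟨u, hu, rfl⟩ := hx
        refine ⟨u, hu, ?_⟩
        show gi' (f' (g u)) = v
        rw [hxv]
        exact hgi'L v hv
    have hφ0 : φ 0 = 0 := conj_fix_zero hLg hLg' hφc hφinj hφim hφconj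
    have heq : EqOn φ h (Icc (0:ℝ) 1) :=
      conj_unique hLg hφc hhc.continuousOn hφconj hhconj (by rw [hφ0, hh0])
    intro x hx
    have hu : gi x ∈ Icc (0:ℝ) 1 := hgiM x hx
    have hgu : g (gi x) = x := hgiR x hx
    have e1 : f' x = g' (φ (gi x)) := by
      have := hg'φ (gi x) hu
      rw [hgu] at this
      exact this.symm
    show g' (h (gi x)) = f' x
    rw [e1, heq hu]
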